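/- For the field v⁰ with phases ξ₁=−π/3, ξ₂=π/3, ξ₃=π/2, the convective term g⁰₁ = Σⱼ v⁰ⱼ ∂v⁰₁/∂xⱼ equals −(3α/8)sin(2αx₁) − (3α/32)sin(2αx₁)[cos(2αx₂)+cos(2αx₃)] − (3√3α/32)cos(2αx₁)[cos(2αx₃)−cos(2αx₂)] + (3√3α/32)sin(2αx₁)[sin(2αx₂)−sin(2αx₃)] + (3α/32)cos(2αx₁)[sin(2αx₃)+sin(2αx₂)]. -/

import Mathlib

open Real

noncomputable def pd1 (f : ℝ → ℝ → ℝ → ℝ) : ℝ → ℝ → ℝ → ℝ :=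
  fun x₁ x₂ x₃ => deriv (fun y => f y x₂ x₃) x₁

noncomputable def pd2 (f : ℝ → ℝ → ℝ → ℝ) : ℝ → ℝ → ℝ → ℝ :=
  fun x₁ x₂ x₃ => deriv (fun y => f x₁ y x₃) x₂

noncomputable def pd3 (f : ℝ → ℝ → ℝ → ℝ) : ℝ → ℝ → ℝ → ℝ :=
  fun x₁ x₂ x₃ => deriv (fun y => f x₁ x₂ y) x₃

noncomputable def lap3 (f : ℝ → ℝ → ℝ → ℝ) : ℝ → ℝ → ℝ → ℝ :=
  fun x₁ x₂ x₃ => pd1 (pd1 f) x₁ x₂ x₃ + pd2 (pd2 f) x₁ x₂ x₃ + pd3 (pd3 f) x₁ x₂ x₃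

/-- First component of the field with phases ξ₁ = -π/3, ξ₂ = π/3, ξ₃ = π/2. -/
noncomputable def V1 (α x₁ x₂ x₃ : ℝ) : ℝ :=
  sin (α * x₁ - π/3) * cos (α * x₂ + π/3) * sin (α * x₃ + π/2)
    - sin (α * x₁ + π/3) * cos (α * x₃ - π/3) * sin (α * x₂ + π/2)

noncomputable def V2 (α x₁ x₂ x₃ : ℝ) : ℝ := V1 α x₂ x₃ x₁

noncomputable def V3 (α x₁ x₂ x₃ : ℝ) : ℝ := V1 α x₃ x₁ x₂

theorem convective_term_g1 (α x₁ x₂ x₃ : ℝ) :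
    V1 α x₁ x₂ x₃ * pd1 (V1 α) x₁ x₂ x₃
      + V2 α x₁ x₂ x₃ * pd2 (V1 α) x₁ x₂ x₃
      + V3 α x₁ x₂ x₃ * pd3 (V1 α) x₁ x₂ x₃
    = -(3*α/8) * sin (2*α*x₁)
      - (3*α/32) * sin (2*α*x₁) * (cos (2*α*x₂) + cos (2*α*x₃))
      - (3*Real.sqrt 3*α/32) * cos (2*α*x₁) * (cos (2*α*x₃) - cos (2*α*x₂))
      + (3*Real.sqrt 3*α/32) * sin (2*α*x₁) * (sin (2*α*x₂) - sin (2*α*x₃))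
      + (3*α/32) * cos (2*α*x₁) * (sin (2*α*x₃) + sin (2*α*x₂)) := by

  have e1 : pd1 (V1 α) x₁ x₂ x₃ =
      cos (α*x₁ - π/3) * α * cos (α*x₂ + π/3) * sin (α*x₃ + π/2)
        - cos (α*x₁ + π/3) * α * cos (α*x₃ - π/3) * sin (α*x₂ + π/2) := by
    have h1 : HasDerivAt (fun y : ℝ => sin (α * y - π/3)) (cos (α*x₁ - π/3) * α) x₁ := by
      simpa using (((hasDerivAt_id x₁).const_mul α).sub_const (π/3)).sin
    have h2 : HasDerivAt (fun y : ℝ => sin (α * y + π/3)) (cos (α*x₁ + π/3) * α) x₁ := by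
      simpa using (((hasDerivAt_id x₁).const_mul α).add_const (π/3)).sin
    have h := ((h1.mul_const (cos (α*x₂ + π/3))).mul_const (sin (α*x₃ + π/2))).sub
      ((h2.mul_const (cos (α*x₃ - π/3))).mul_const (sin (α*x₂ + π/2)))
    simpa [pd1, V1, Pi.sub_def] using h.deriv
  have e2 : pd2 (V1 α) x₁ x₂ x₃ =
      sin (α*x₁ - π/3) * (-sin (α*x₂ + π/3) * α) * sin (α*x₃ + π/2)
        - sin (α*x₁ + π/3) * cos (α*x₃ - π/3) * (cos (α*x₂ + π/2) * α) := by
    have h1 : HasDerivAt (fun y : ℝ => cos (α * y + π/3)) (-sin (α*x₂ + π/3) * α) x₂ := by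
      simpa using (((hasDerivAt_id x₂).const_mul α).add_const (π/3)).cos
    have h2 : HasDerivAt (fun y : ℝ => sin (α * y + π/2)) (cos (α*x₂ + π/2) * α) x₂ := by
      simpa using (((hasDerivAt_id x₂).const_mul α).add_const (π/2)).sin
    have h := ((h1.const_mul (sin (α*x₁ - π/3))).mul_const (sin (α*x₃ + π/2))).sub
      (h2.const_mul (sin (α*x₁ + π/3) * cos (α*x₃ - π/3)))
    have := h.deriv
    simp only [pd2, V1]
    exact this
  have e3 : pd3 (V1 α) x₁ x₂ x₃ =
      sin (α*x₁ - π/3) * cos (α*x₂ + π/3) * (cos (α*x₃ + π/2) * α)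
        - sin (α*x₁ + π/3) * (-sin (α*x₃ - π/3) * α) * sin (α*x₂ + π/2) := by
    have h1 : HasDerivAt (fun y : ℝ => sin (α * y + π/2)) (cos (α*x₃ + π/2) * α) x₃ := by
      simpa using (((hasDerivAt_id x₃).const_mul α).add_const (π/2)).sin
    have h2 : HasDerivAt (fun y : ℝ => cos (α * y - π/3)) (-sin (α*x₃ - π/3) * α) x₃ := by
      simpa using (((hasDerivAt_id x₃).const_mul α).sub_const (π/3)).cos
    have h := (h1.const_mul (sin (α*x₁ - π/3) * cos (α*x₂ + π/3))).sub
      ((h2.const_mul (sin (α*x₁ + π/3))).mul_const (sin (α*x₂ + π/2)))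
    have := h.deriv
    simp only [pd3, V1]
    exact this
  rw [e1, e2, e3]
  rw [show (2:ℝ)*α*x₁ = α*x₁ + α*x₁ by ring, show (2:ℝ)*α*x₂ = α*x₂ + α*x₂ by ring,
      show (2:ℝ)*α*x₃ = α*x₃ + α*x₃ by ring]
  simp only [V1, V2, V3, sin_add, cos_add, sin_sub, cos_sub, sin_pi_div_two, cos_pi_div_two,
    sin_pi_div_three, cos_pi_div_three, mul_zero, zero_mul, mul_one, one_mul, sub_zero,
    zero_sub, add_zero, zero_add, mul_neg, neg_mul, neg_neg]
  set s1 := sin (α*x₁) with hs1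
  set c1 := cos (α*x₁) with hc1
  set s2 := sin (α*x₂) with hs2
  set c2 := cos (α*x₂) with hc2
  set s3 := sin (α*x₃) with hs3
  set c3 := cos (α*x₃) with hc3
  set r := Real.sqrt 3 with hrr
  have hr : r^2 = 3 := Real.sq_sqrt (by norm_num)
  have h1 : s1^2 + c1^2 = 1 := sin_sq_add_cos_sq _
  have h2 : s2^2 + c2^2 = 1 := sin_sq_add_cos_sq _
  have h3 : s3^2 + c3^2 = 1 := sin_sq_add_cos_sq _
  linear_combination (norm := ring_nf)
      (α * ((1/16 : ℝ) * c1^2 * c2^2 * s3 * c3 + (1/16 : ℝ) * c1^2 * c2^2 * s3 * c3 * r^2 + (1/16 : ℝ) * c1^2 * c2^2 * s3^2 * r + (1/16 : ℝ) * c1^2 * s2 * c2 * c3^2 + (1/16 : ℝ) * c1^2 * s2 * c2 * c3^2 * r^2 + (1/16 : ℝ) * c1^2 * s2 * c2 * s3^2 + (1/16 : ℝ) * c1^2 * s2 * c2 * s3^2 * r^2 + (-1/16 : ℝ) * c1^2 * s2^2 * c3^2 * r + (1/16 : ℝ) * c1^2 * s2^2 * s3 * c3 + (1/16 : ℝ)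 * c1^2 * s2^2 * s3 * c3 * r^2 + (-3/8 : ℝ) * s1 * c1 * c2^2 * c3^2 + (-1/8 : ℝ) * s1 * c1 * c2^2 * c3^2 * r^2 + (-1/8 : ℝ) * s1 * c1 * c2^2 * s3 * c3 * r + (-1/4 : ℝ) * s1 * c1 * c2^2 * s3^2 + (-1/16 : ℝ) * s1 * c1 * c2^2 * s3^2 * r^2 + (1/8 : ℝ) * s1 * c1 * s2 * c2 * c3^2 * r + (1/8 : ℝ) * s1 * c1 * s2 * c2 * s3^2 * r + (-1/4 : ℝ) * s1 * c1 * s2^2 * c3^2 + (-1/16 : ℝ) * s1 * c1 * s2^2 * c3^2 * r^2 + (-1/8 : ℝ) * s1 * c1 * s2^2 * s3 * c3 * r + (-1/8 : ℝ) * s1 * c1 * s2^2 * s3^2 + (-1/16 : ℝ) * s1^2 * c2^2 * s3 * c3 + (-1/16 : ℝ) * s1^2 * c2^2 * s3^2 * r + (-1/16 : ℝ) * s1^2 * s2 * c2 * c3^2 + (-1/16 : ℝ) * s1^2 * s2 * c2 * s3^2 + (1/16 : ℝ) * s1^2 * s2^2 * c3^2 * r + (-1/16 : ℝ) * s1^2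 * s2^2 * s3 * c3)) * hr
      + (α * ((3/32 : ℝ) * c3^2 * r + (-3/16 : ℝ) * s3 * c3 + (-3/32 : ℝ) * s3^2 * r + (-3/32 : ℝ) * c2^2 * r + (3/16 : ℝ) * c2^2 * s3 * c3 + (3/16 : ℝ) * c2^2 * s3^2 * r + (-3/16 : ℝ) * s2 * c2 + (3/16 : ℝ) * s2 * c2 * c3^2 + (3/16 : ℝ) * s2 * c2 * s3^2 + (3/32 : ℝ) * s2^2 * r + (-3/16 : ℝ) * s2^2 * c3^2 * r + (3/16 : ℝ) * s2^2 * s3 * c3)) * h1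
      + (α * ((-3/32 : ℝ) * r + (3/16 : ℝ) * s3 * c3 + (3/16 : ℝ) * s3^2 * r + (3/16 : ℝ) * s1 * c1 + (-9/8 : ℝ) * s1 * c1 * c3^2 + (-3/8 : ℝ) * s1 * c1 * s3 * c3 * r + (-3/4 : ℝ) * s1 * c1 * s3^2 + (3/16 : ℝ) * s1^2 * r + (-3/8 : ℝ) * s1^2 * s3 * c3 + (-3/8 : ℝ) * s1^2 * s3^2 * r)) * h2
      + (α * ((3/32 : ℝ) * r + (3/16 : ℝ) * s2 * c2 + (-3/16 : ℝ) * s2^2 * r + (-15/16 : ℝ) * s1 * c1 + (3/8 : ℝ) * s1 * c1 * s2 * c2 * r + (3/8 : ℝ) * s1 * c1 * s2^2 + (-3/16 : ℝ) * s1^2 * r + (-3/8 : ℝ) * s1^2 * s2 * c2 + (3/8 : ℝ) * s1^2 * s2^2 * r)) * h3
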